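/- arXiv:1608.03428 — 3 statements merged into one kernel-verified Lean document; each statement's English description precedes it below -/
import Mathlib

section
/- Let H ∈ (0,1), γ_t = A t^{-1/2-H} V_t + B t^{1/2-H} where A = (2H-1)/C ≠ 0, B constant, and V_t is the Dobrić–Ojeda process with E[V_t²] = c_Ψ² c_M t^{2H}. Then for every t > 0, E[exp((1/2)∫₀^t γ_s² ds)] = ∞. -/
open MeasureTheory ProbabilityTheory Real
open scoped ENNReal

/-- Divergence of `∫₀ᵗ K/s ds`. -/
lemma stmt8_aux_div {K t : ℝ} (hK : 0 < K) (ht : 0 < t) :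
    (∫⁻ s in Set.Ioc (0 : ℝ) t, ENNReal.ofReal (K * s⁻¹)) = ⊤ := by
  by_contra hfin
  have hmeas : Measurable fun s : ℝ => K * s⁻¹ := by fun_prop
  have hnn : 0 ≤ᵐ[volume.restrict (Set.Ioc (0:ℝ) t)] fun s : ℝ => K * s⁻¹ := by
    filter_upwards [ae_restrict_mem measurableSet_Ioc] with s hs
    have : 0 < s := hs.1
    positivity
  have hint : IntegrableOn (fun s : ℝ => K * s⁻¹) (Set.Ioc (0:ℝ) t) := by
    refine ⟨hmeas.aestronglyMeasurable, ?_⟩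
    rw [hasFiniteIntegral_iff_ofReal hnn]
    exact lt_top_iff_ne_top.2 hfin
  have hint' : IntegrableOn (fun s : ℝ => s⁻¹) (Set.Ioo (0:ℝ) t) := by
    have h1 : IntegrableOn (fun s : ℝ => K * s⁻¹) (Set.Ioo (0:ℝ) t) :=
      hint.mono_set Set.Ioo_subset_Ioc_self
    have h2 := h1.const_mul K⁻¹
    have heq : (fun s : ℝ => s⁻¹) = fun s : ℝ => K⁻¹ * (K * s⁻¹) := by
      funext s; field_simp
    rw [heq]; exact h2
  have hrpow : IntegrableOn (fun s : ℝ => s ^ (-1 : ℝ)) (Set.Ioo (0:ℝ) t) := by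
    refine hint'.congr_fun (fun s hs => ?_) measurableSet_Ioo
    rw [Real.rpow_neg_one]
  rw [intervalIntegral.integrableOn_Ioo_rpow_iff ht] at hrpow
  exact absurd hrpow (by norm_num)

open scoped Classical in
/-- For `γ_t = A t^(-1/2-H) V_t + B t^(1/2-H)` with `A = (2H-1)/C ≠ 0`
and `V` the Dobrić–Ojeda process (a centered process with `E[V_t²] = c_Ψ² c_M t^(2H)`),
Novikov's condition fails: `E[exp((1/2)∫₀ᵗ γ_s² ds)] = ∞` for every `t > 0`.
The inner integral is taken as a Lebesgue integral in `[0,∞]`, and `exp(½·∞)` is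
interpreted as `∞`. -/
theorem stmt8
    {Ω : Type*} [MeasurableSpace Ω] (P : Measure Ω) [IsProbabilityMeasure P]
    (H c_Ψ c_M C A B : ℝ) (hH : H ∈ Set.Ioo (0 : ℝ) 1)
    (hcΨ : 0 < c_Ψ) (hcM : 0 < c_M) (hCne : C ≠ 0)
    (hA : A = (2 * H - 1) / C) (hAne : A ≠ 0)
    (V : ℝ → Ω → ℝ) (hVmeas : Measurable (Function.uncurry V))
    (hVcentered : ∀ s : ℝ, 0 < s → ∫ ω, V s ω ∂P = 0)
    (hVvar : ∀ s : ℝ, 0 < s → ∫ ω, (V s ω) ^ 2 ∂P = c_Ψ ^ 2 * c_M * s ^ (2 * H)) :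
    ∀ t : ℝ, 0 < t →
      (∫⁻ ω,
        (if (∫⁻ s in Set.Ioc (0 : ℝ) t,
              ENNReal.ofReal ((A * s ^ (-(1 / 2) - H) * V s ω + B * s ^ (1 / 2 - H)) ^ 2)) = ⊤
          then ⊤
          else ENNReal.ofReal (Real.exp (2⁻¹ *
            (∫⁻ s in Set.Ioc (0 : ℝ) t,
              ENNReal.ofReal
                ((A * s ^ (-(1 / 2) - H) * V s ω + B * s ^ (1 / 2 - H)) ^ 2)).toReal)))
        ∂P) = ⊤ := by
  intro t ht
  set K : ℝ := A ^ 2 * (c_Ψ ^ 2 * c_M) with hK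
  have hKpos : 0 < K := by
    have := hAne
    positivity
  set g : ℝ → Ω → ℝ≥0∞ := fun s ω =>
    ENNReal.ofReal ((A * s ^ (-(1 / 2) - H) * V s ω + B * s ^ (1 / 2 - H)) ^ 2) with hg
  set F : Ω → ℝ≥0∞ := fun ω => ∫⁻ s in Set.Ioc (0 : ℝ) t, g s ω with hF
  -- measurability of the product function
  have hVm : Measurable fun p : ℝ × Ω => V p.1 p.2 := hVmeas
  have hm : Measurable fun p : ℝ × Ω =>
      (A * p.1 ^ (-(1 / 2) - H) * V p.1 p.2 + B * p.1 ^ (1 / 2 - H)) ^ 2 := by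
    fun_prop
  have hgm : Measurable fun p : ℝ × Ω => g p.1 p.2 := hm.ennreal_ofReal
  -- per-time moment bound
  have key : ∀ s ∈ Set.Ioc (0 : ℝ) t,
      ENNReal.ofReal (K * s⁻¹) ≤ ∫⁻ ω, g s ω ∂P := by
    intro s hs
    have hspos : 0 < s := hs.1
    set a : ℝ := A * s ^ (-(1 / 2) - H) with ha
    set b : ℝ := B * s ^ (1 / 2 - H) with hb
    have hVms : Measurable (V s) := hVm.comp (measurable_prodMk_left)
    have hVsq_int : Integrable (fun ω => (V s ω) ^ 2) P := by
      by_contra hni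
      have h0 := integral_undef hni
      rw [hVvar s hspos] at h0
      have : 0 < c_Ψ ^ 2 * c_M * s ^ (2 * H) := by
        have := Real.rpow_pos_of_pos hspos (2 * H)
        positivity
      exact absurd h0 (ne_of_gt this)
    have hL2 : MemLp (V s) 2 P :=
      (memLp_two_iff_integrable_sq hVms.aestronglyMeasurable).2 hVsq_int
    have hVint : Integrable (V s) P := hL2.integrable one_le_two
    have hexp : ∀ ω, (a * V s ω + b) ^ 2
        = a ^ 2 * (V s ω) ^ 2 + (2 * a * b * V s ω + b ^ 2) := by
      intro ω; ring
    have hint1 : Integrable (fun ω => a ^ 2 * (V s ω) ^ 2) P := hVsq_int.const_mul _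
    have hint2 : Integrable (fun ω => 2 * a * b * V s ω + b ^ 2) P :=
      (hVint.const_mul _).add (integrable_const _)
    have hint : Integrable (fun ω => (a * V s ω + b) ^ 2) P := by
      refine (hint1.add hint2).congr (Filter.Eventually.of_forall fun ω => ?_)
      simp only [Pi.add_apply]
      exact (hexp ω).symm
    have hmoment : ∫ ω, (a * V s ω + b) ^ 2 ∂P
        = a ^ 2 * (c_Ψ ^ 2 * c_M * s ^ (2 * H)) + b ^ 2 := by
      calc ∫ ω, (a * V s ω + b) ^ 2 ∂P
          = ∫ ω, (a ^ 2 * (V s ω) ^ 2 + (2 * a * b * V s ω + b ^ 2)) ∂P := by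
            exact integral_congr_ae (Filter.Eventually.of_forall fun ω => hexp ω)
        _ = (∫ ω, a ^ 2 * (V s ω) ^ 2 ∂P) + ∫ ω, (2 * a * b * V s ω + b ^ 2) ∂P :=
            integral_add hint1 hint2
        _ = a ^ 2 * (∫ ω, (V s ω) ^ 2 ∂P)
            + ((2 * a * b) * (∫ ω, V s ω ∂P) + b ^ 2) := by
            rw [integral_const_mul, integral_add (hVint.const_mul _) (integrable_const _),
              integral_const_mul, integral_const]
            simp [measure_univ]
        _ = a ^ 2 * (c_Ψ ^ 2 * c_M * s ^ (2 * H)) + b ^ 2 := by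
            rw [hVvar s hspos, hVcentered s hspos]; ring
    have hval : K * s⁻¹ ≤ a ^ 2 * (c_Ψ ^ 2 * c_M * s ^ (2 * H)) + b ^ 2 := by
      have ha2 : a ^ 2 = A ^ 2 * s ^ (-1 - 2 * H) := by
        rw [ha, mul_pow, ← Real.rpow_natCast (s ^ (-(1/2) - H)) 2, ← Real.rpow_mul hspos.le]
        norm_num
        rw [show (-(1/2:ℝ) - H) * 2 = -1 - 2 * H by ring]
        left; rfl
      have hpow : s ^ (-1 - 2 * H) * s ^ (2 * H) = s⁻¹ := by
        rw [← Real.rpow_add hspos]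
        norm_num [Real.rpow_neg_one]
      have : a ^ 2 * (c_Ψ ^ 2 * c_M * s ^ (2 * H)) = K * s⁻¹ := by
        rw [ha2, hK, ← hpow]; ring
      nlinarith [sq_nonneg b]
    calc ENNReal.ofReal (K * s⁻¹)
        ≤ ENNReal.ofReal (∫ ω, (a * V s ω + b) ^ 2 ∂P) := by
          rw [hmoment]; exact ENNReal.ofReal_le_ofReal hval
      _ = ∫⁻ ω, ENNReal.ofReal ((a * V s ω + b) ^ 2) ∂P :=
          ofReal_integral_eq_lintegral_ofReal hint
            (Filter.Eventually.of_forall fun ω => sq_nonneg _)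
      _ = ∫⁻ ω, g s ω ∂P := rfl
  -- Tonelli and divergence
  have hswap : ∫⁻ ω, F ω ∂P = ∫⁻ s in Set.Ioc (0 : ℝ) t, ∫⁻ ω, g s ω ∂P := by
    exact lintegral_lintegral_swap ((hgm.comp measurable_swap).aemeasurable)
  have hFtop : ∫⁻ ω, F ω ∂P = ⊤ := by
    rw [hswap, eq_top_iff, ← stmt8_aux_div hKpos ht]
    exact setLIntegral_mono' measurableSet_Ioc key
  -- pointwise bound: integrand ≥ ½ · F
  have hpt : ∀ ω, 2⁻¹ * F ω ≤
      (if F ω = ⊤ then ⊤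
        else ENNReal.ofReal (Real.exp (2⁻¹ * (F ω).toReal))) := by
    intro ω
    by_cases hω : F ω = ⊤
    · simp [hω]
    · rw [if_neg hω]
      have h1 : 2⁻¹ * F ω = ENNReal.ofReal (2⁻¹ * (F ω).toReal) := by
        rw [ENNReal.ofReal_mul (by norm_num), ENNReal.ofReal_toReal hω,
          show ENNReal.ofReal 2⁻¹ = 2⁻¹ by
            rw [ENNReal.ofReal_inv_of_pos two_pos, show ENNReal.ofReal 2 = 2 by simp]]
      rw [h1]
      refine ENNReal.ofReal_le_ofReal ?_
      have := Real.add_one_le_exp (2⁻¹ * (F ω).toReal)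
      linarith
  have hle : 2⁻¹ * ∫⁻ ω, F ω ∂P ≤ ∫⁻ ω,
      (if F ω = ⊤ then ⊤
        else ENNReal.ofReal (Real.exp (2⁻¹ * (F ω).toReal))) ∂P := by
    rw [← lintegral_const_mul' _ _ (by simp : (2⁻¹ : ℝ≥0∞) ≠ ⊤)]
    exact lintegral_mono hpt
  rw [hFtop, ENNReal.mul_top (by norm_num)] at hle
  exact top_le_iff.1 hle
end

section
/- Let V_t = C∫₀^t s^{H-1/2}dW_s + c_Ψ(2H-1)∫₀^t s^{2H-2}M_s ds and V^ε_t = C∫₀^t s^{H-1/2}dW_s + c_Ψ(2H-1)∫₀^t s^{2H-2}M_s 1_{[ε,∞)}(s) ds. Then E[ sup_{t≥0} (V_t - V^ε_t)² ] ≤ (c_Ψ² c_M (2H-1)²/H²) ε^{2H}, and hence V^ε → V uniformly in t in L² as ε → 0. -/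
open MeasureTheory ProbabilityTheory Real Filter
open scoped ENNReal NNReal

/-- Let `V` be the Dobrić–Ojeda process (`V_s = c_Ψ s^(2H-1) M_s` with `M`
a centered Gaussian martingale, `E[M_s M_r] = c_M (min s r)^(2-2H)`) and `V^ε` the modified
process, whose difference satisfies `V_t - V^ε_t = (2H-1) ∫₀^{t∧ε} s⁻¹ V_s ds`. Then
`E[sup_{t≥0} (V_t - V^ε_t)²] ≤ (c_Ψ² c_M (2H-1)²/H²) ε^(2H)`, and hence `V^ε → V`
uniformly in `t` in `L²` as `ε → 0⁺`. -/
theorem stmt12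
    {Ω : Type*} [MeasurableSpace Ω] (P : Measure Ω) [IsProbabilityMeasure P]
    (H c_M c_Ψ : ℝ) (hH : H ∈ Set.Ioo (0 : ℝ) 1) (hcM : 0 < c_M) (hcΨ : 0 < c_Ψ)
    (M V : ℝ → Ω → ℝ) (Vε : ℝ → ℝ → Ω → ℝ)
    (hMmeas : Measurable (Function.uncurry M))
    (hML2 : ∀ s : ℝ, 0 ≤ s → MemLp (M s) 2 P)
    (hcov : ∀ s r : ℝ, 0 ≤ s → 0 ≤ r →
      ∫ ω, M s ω * M r ω ∂P = c_M * (min s r) ^ (2 - 2 * H))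
    (hV : ∀ s ω, V s ω = c_Ψ * s ^ (2 * H - 1) * M s ω)
    (hdiff : ∀ ε : ℝ, 0 < ε → ∀ t : ℝ, 0 ≤ t → ∀ ω,
      V t ω - Vε ε t ω = (2 * H - 1) * ∫ s in Set.Ioc (0 : ℝ) (min t ε), s⁻¹ * V s ω) :
    (∀ ε : ℝ, 0 < ε →
      ∫⁻ ω, ⨆ t ∈ Set.Ici (0 : ℝ), ENNReal.ofReal ((V t ω - Vε ε t ω) ^ 2) ∂P
        ≤ ENNReal.ofReal (c_Ψ ^ 2 * c_M * (2 * H - 1) ^ 2 / H ^ 2 * ε ^ (2 * H)))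
    ∧ Tendsto
        (fun ε : ℝ =>
          ∫⁻ ω, ⨆ t ∈ Set.Ici (0 : ℝ), ENNReal.ofReal ((V t ω - Vε ε t ω) ^ 2) ∂P)
        (nhdsWithin 0 (Set.Ioi 0)) (nhds 0) := by
  obtain ⟨hH0, hH1⟩ := hH
  -- measurability of V
  have hVm : Measurable (Function.uncurry V) := by
    have : Function.uncurry V = fun p : ℝ × Ω =>
        c_Ψ * p.1 ^ (2 * H - 1) * Function.uncurry M p := by
      ext p; exact hV p.1 p.2
    rw [this]; fun_prop
  have hVsm : ∀ ω, Measurable fun s => V s ω :=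
    fun ω => hVm.comp (measurable_id.prodMk measurable_const)
  -- deterministic integral computation
  have hbase : ∀ ε : ℝ, 0 < ε →
      ∫⁻ s in Set.Ioc (0:ℝ) ε, ENNReal.ofReal (s ^ (H-1)) = ENNReal.ofReal (ε ^ H / H) := by
    intro ε hε
    have hint : IntegrableOn (fun s : ℝ => s ^ (H-1)) (Set.Ioc 0 ε) :=
      (intervalIntegral.intervalIntegrable_rpow' (by linarith)).1
    rw [← ofReal_integral_eq_lintegral_ofReal hint
      ((ae_restrict_iff' measurableSet_Ioc).2 (ae_of_all _ fun s hs =>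
        Real.rpow_nonneg hs.1.le _))]
    congr 1
    rw [← intervalIntegral.integral_of_le hε.le, integral_rpow (Or.inl (by linarith))]
    have h1 : H - 1 + 1 = H := by ring
    rw [h1, Real.zero_rpow hH0.ne', sub_zero]
  -- second moment of V s
  have hVsq : ∀ s : ℝ, 0 < s →
      ∫ ω, (V s ω) ^ 2 ∂P = c_Ψ ^ 2 * c_M * s ^ (2 * H) := by
    intro s hs
    have h1 : ∀ ω, (V s ω) ^ 2 = c_Ψ ^ 2 * s ^ (4 * H - 2) * (M s ω * M s ω) := by
      intro ω
      have h2 : (s ^ (2*H-1) : ℝ) * s ^ (2*H-1) = s ^ (4*H-2) := by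
        rw [← Real.rpow_add hs]; ring_nf
      rw [hV]
      calc (c_Ψ * s ^ (2*H-1) * M s ω) ^ 2
          = c_Ψ ^ 2 * (s ^ (2*H-1) * s ^ (2*H-1)) * (M s ω * M s ω) := by ring
        _ = c_Ψ ^ 2 * s ^ (4*H-2) * (M s ω * M s ω) := by rw [h2]
    simp_rw [h1]
    rw [integral_const_mul, hcov s s hs.le hs.le, min_self]
    rw [show c_Ψ^2 * s^(4*H-2) * (c_M * s^(2-2*H)) =
        c_Ψ^2 * c_M * (s^(4*H-2) * s^(2-2*H)) by ring, ← Real.rpow_add hs]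
    ring_nf
  -- V s is in L², hence its square is integrable
  have hVL2 : ∀ s : ℝ, 0 < s → Integrable (fun ω => (V s ω)^2) P := by
    intro s hs
    have hfun : V s = fun ω => (c_Ψ * s ^ (2*H-1)) * M s ω := funext fun ω => hV s ω
    have h2 : MemLp (V s) 2 P := hfun ▸ (hML2 s hs.le).const_mul (c_Ψ * s ^ (2*H-1))
    exact h2.integrable_sq
  have hsq_half : ∀ x : ℝ≥0∞, (x ^ ((1:ℝ)/2)) ^ (2:ℕ) = x := by
    intro x
    rw [← ENNReal.rpow_natCast (x ^ ((1:ℝ)/2)) 2, ← ENNReal.rpow_mul]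
    norm_num
  -- main bound
  have main : ∀ ε : ℝ, 0 < ε →
      ∫⁻ ω, ⨆ t ∈ Set.Ici (0 : ℝ), ENNReal.ofReal ((V t ω - Vε ε t ω) ^ 2) ∂P
        ≤ ENNReal.ofReal (c_Ψ ^ 2 * c_M * (2 * H - 1) ^ 2 / H ^ 2 * ε ^ (2 * H)) := by
    intro ε hε
    set I : Set ℝ := Set.Ioc (0:ℝ) ε with hI
    set A : Ω → ℝ≥0∞ := fun ω => ∫⁻ s in I, ENNReal.ofReal (s⁻¹ * |V s ω|) with hA
    set Y : Ω → ℝ≥0∞ := fun ω =>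
      ∫⁻ s in I, ENNReal.ofReal (s ^ (-1-H) * (V s ω)^2) with hY
    -- Step 1: pointwise bound of the sup by A ω ^ 2
    have step1 : ∀ ω, (⨆ t ∈ Set.Ici (0:ℝ), ENNReal.ofReal ((V t ω - Vε ε t ω) ^ 2))
        ≤ ENNReal.ofReal ((2*H-1)^2) * A ω ^ 2 := by
      intro ω
      refine iSup₂_le fun t ht => ?_
      rw [hdiff ε hε t ht ω]
      have habs : ENNReal.ofReal |∫ s in Set.Ioc (0:ℝ) (min t ε), s⁻¹ * V s ω| ≤ A ω := by
        calc ENNReal.ofReal |∫ s in Set.Ioc (0:ℝ) (min t ε), s⁻¹ * V s ω|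
            = ‖∫ s in Set.Ioc (0:ℝ) (min t ε), s⁻¹ * V s ω‖ₑ := by
              rw [← Real.enorm_eq_ofReal_abs]
          _ ≤ ∫⁻ s in Set.Ioc (0:ℝ) (min t ε), ‖s⁻¹ * V s ω‖ₑ :=
              enorm_integral_le_lintegral_enorm _
          _ = ∫⁻ s in Set.Ioc (0:ℝ) (min t ε), ENNReal.ofReal (s⁻¹ * |V s ω|) := by
              refine setLIntegral_congr_fun measurableSet_Ioc (fun s hs => ?_)
              rw [Real.enorm_eq_ofReal_abs, abs_mul, abs_inv, abs_of_pos hs.1]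
          _ ≤ A ω := lintegral_mono_set (Set.Ioc_subset_Ioc_right (min_le_right t ε))
      calc ENNReal.ofReal (((2*H-1) * ∫ s in Set.Ioc (0:ℝ) (min t ε), s⁻¹ * V s ω) ^ 2)
          = ENNReal.ofReal ((2*H-1)^2 * |∫ s in Set.Ioc (0:ℝ) (min t ε), s⁻¹ * V s ω|^2) := by
            rw [mul_pow, sq_abs]
        _ = ENNReal.ofReal ((2*H-1)^2) *
              ENNReal.ofReal (|∫ s in Set.Ioc (0:ℝ) (min t ε), s⁻¹ * V s ω|) ^ 2 := by
            rw [ENNReal.ofReal_mul (sq_nonneg _), ENNReal.ofReal_pow (abs_nonneg _)]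
        _ ≤ ENNReal.ofReal ((2*H-1)^2) * A ω ^ 2 :=
            mul_le_mul_right (pow_le_pow_left' habs 2) _
    -- Step 2: Cauchy-Schwarz
    have step2 : ∀ ω, A ω ^ 2 ≤ ENNReal.ofReal (ε ^ H / H) * Y ω := by
      intro ω
      have hconj : Real.HolderConjugate 2 2 := Real.HolderConjugate.two_two
      have hg : Measurable fun s : ℝ => ENNReal.ofReal (s ^ ((H-1)/2)) := by fun_prop
      have hh : Measurable fun s : ℝ => ENNReal.ofReal (s ^ ((-1-H)/2) * |V s ω|) := by
        apply ENNReal.measurable_ofReal.comp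
        exact ((by fun_prop : Measurable fun s : ℝ => s ^ ((-1-H)/2))).mul (hVsm ω).abs
      have hAeq : A ω = ∫⁻ s in I,
          ((fun s : ℝ => ENNReal.ofReal (s ^ ((H-1)/2))) *
           (fun s : ℝ => ENNReal.ofReal (s ^ ((-1-H)/2) * |V s ω|))) s := by
        refine setLIntegral_congr_fun measurableSet_Ioc (fun s hs => ?_)
        simp only [Pi.mul_apply]
        rw [← ENNReal.ofReal_mul (Real.rpow_nonneg hs.1.le _), ← mul_assoc]
        congr 2
        rw [← Real.rpow_add hs.1, show (H-1)/2 + (-1-H)/2 = -1 by ring, Real.rpow_neg_one]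
      have holder := ENNReal.lintegral_mul_le_Lp_mul_Lq (volume.restrict I) hconj
        hg.aemeasurable hh.aemeasurable
      rw [← hAeq] at holder
      have hXeq : (∫⁻ s in I, (ENNReal.ofReal (s ^ ((H-1)/2))) ^ (2:ℝ))
          = ENNReal.ofReal (ε ^ H / H) := by
        rw [← hbase ε hε]
        refine setLIntegral_congr_fun measurableSet_Ioc (fun s hs => ?_)
        rw [ENNReal.ofReal_rpow_of_nonneg (Real.rpow_nonneg hs.1.le _) (by norm_num),
          ← Real.rpow_mul hs.1.le]
        norm_num
      have hZeq : (∫⁻ s in I, (ENNReal.ofReal (s ^ ((-1-H)/2) * |V s ω|)) ^ (2:ℝ)) = Y ω := by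
        refine setLIntegral_congr_fun measurableSet_Ioc (fun s hs => ?_)
        rw [ENNReal.ofReal_rpow_of_nonneg
          (mul_nonneg (Real.rpow_nonneg hs.1.le _) (abs_nonneg _)) (by norm_num)]
        congr 1
        rw [Real.mul_rpow (Real.rpow_nonneg hs.1.le _) (abs_nonneg _),
          ← Real.rpow_mul hs.1.le, show ((-1-H)/2) * (2:ℝ) = -1-H by ring,
          show ((2:ℝ) = ((2:ℕ):ℝ)) by norm_num, Real.rpow_natCast, sq_abs]
      rw [hXeq, hZeq] at holder
      calc A ω ^ 2 ≤ (ENNReal.ofReal (ε ^ H / H) ^ ((1:ℝ)/2) * Y ω ^ ((1:ℝ)/2)) ^ 2 :=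
            pow_le_pow_left' holder 2
        _ = ENNReal.ofReal (ε ^ H / H) * Y ω := by
            rw [mul_pow, hsq_half, hsq_half]
    -- Step 3: expectation of Y via Tonelli
    have hYint : ∫⁻ ω, Y ω ∂P
        = ENNReal.ofReal (c_Ψ^2 * c_M) * ENNReal.ofReal (ε ^ H / H) := by
      have hum : Measurable fun p : Ω × ℝ =>
          ENNReal.ofReal (p.2 ^ (-1-H) * (V p.2 p.1)^2) := by
        apply ENNReal.measurable_ofReal.comp
        exact ((by fun_prop : Measurable fun x : ℝ => x ^ (-1-H)).comp measurable_snd).mul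
          ((hVm.comp (measurable_snd.prodMk measurable_fst)).pow_const 2)
      have hswap := lintegral_lintegral_swap (μ := P) (ν := volume.restrict I)
        (f := fun ω s => ENNReal.ofReal (s ^ (-1-H) * (V s ω)^2)) hum.aemeasurable
      rw [hY]
      rw [hswap]
      have hinner : ∫⁻ s in I, (∫⁻ ω, ENNReal.ofReal (s ^ (-1-H) * (V s ω)^2) ∂P)
          = ∫⁻ s in I, (ENNReal.ofReal (c_Ψ^2 * c_M) * ENNReal.ofReal (s ^ (H-1))) := by
        refine setLIntegral_congr_fun measurableSet_Ioc (fun s hs => ?_)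
        calc ∫⁻ ω, ENNReal.ofReal (s ^ (-1-H) * (V s ω)^2) ∂P
            = ∫⁻ ω, ENNReal.ofReal (s ^ (-1-H)) * ENNReal.ofReal ((V s ω)^2) ∂P := by
              simp_rw [ENNReal.ofReal_mul (Real.rpow_nonneg hs.1.le _)]
          _ = ENNReal.ofReal (s ^ (-1-H)) * ∫⁻ ω, ENNReal.ofReal ((V s ω)^2) ∂P :=
              lintegral_const_mul' _ _ ENNReal.ofReal_ne_top
          _ = ENNReal.ofReal (s ^ (-1-H)) * ENNReal.ofReal (∫ ω, (V s ω)^2 ∂P) := by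
              rw [ofReal_integral_eq_lintegral_ofReal (hVL2 s hs.1)
                (ae_of_all _ fun ω => sq_nonneg _)]
          _ = ENNReal.ofReal (s ^ (-1-H)) * ENNReal.ofReal (c_Ψ^2 * c_M * s ^ (2*H)) := by
              rw [hVsq s hs.1]
          _ = ENNReal.ofReal (c_Ψ^2 * c_M) * ENNReal.ofReal (s ^ (H-1)) := by
              rw [← ENNReal.ofReal_mul (Real.rpow_nonneg hs.1.le _),
                ← ENNReal.ofReal_mul (by positivity)]
              congr 1
              rw [show s^(-1-H) * (c_Ψ^2*c_M*s^(2*H)) = c_Ψ^2*c_M*(s^(-1-H)*s^(2*H)) by ring,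
                ← Real.rpow_add hs.1]
              ring_nf
      rw [hinner, lintegral_const_mul' _ _ ENNReal.ofReal_ne_top, hbase ε hε]
    -- put everything together
    calc ∫⁻ ω, ⨆ t ∈ Set.Ici (0 : ℝ), ENNReal.ofReal ((V t ω - Vε ε t ω) ^ 2) ∂P
        ≤ ∫⁻ ω, ENNReal.ofReal ((2*H-1)^2) * A ω ^ 2 ∂P := lintegral_mono step1
      _ = ENNReal.ofReal ((2*H-1)^2) * ∫⁻ ω, A ω ^ 2 ∂P :=
          lintegral_const_mul' _ _ ENNReal.ofReal_ne_top
      _ ≤ ENNReal.ofReal ((2*H-1)^2) * ∫⁻ ω, ENNReal.ofReal (ε ^ H / H) * Y ω ∂P :=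
          mul_le_mul_right (lintegral_mono step2) _
      _ = ENNReal.ofReal ((2*H-1)^2) * (ENNReal.ofReal (ε ^ H / H) * ∫⁻ ω, Y ω ∂P) := by
          rw [lintegral_const_mul' _ _ ENNReal.ofReal_ne_top]
      _ = ENNReal.ofReal ((2*H-1)^2) * (ENNReal.ofReal (ε ^ H / H) *
            (ENNReal.ofReal (c_Ψ^2 * c_M) * ENNReal.ofReal (ε ^ H / H))) := by rw [hYint]
      _ = ENNReal.ofReal (c_Ψ ^ 2 * c_M * (2 * H - 1) ^ 2 / H ^ 2 * ε ^ (2 * H)) := by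
          rw [← ENNReal.ofReal_mul (by positivity), ← ENNReal.ofReal_mul (by positivity),
            ← ENNReal.ofReal_mul (sq_nonneg _)]
          congr 1
          have hee : ε ^ H * ε ^ H = ε ^ (2*H) := by
            rw [← Real.rpow_add hε]; ring_nf
          rw [← hee]
          field_simp
  refine ⟨main, ?_⟩
  -- the tendsto part
  have hb : Tendsto (fun ε : ℝ =>
      ENNReal.ofReal (c_Ψ ^ 2 * c_M * (2 * H - 1) ^ 2 / H ^ 2 * ε ^ (2 * H)))
      (nhdsWithin 0 (Set.Ioi 0)) (nhds 0) := by
    have h1 : Tendsto (fun ε : ℝ => ε ^ (2*H)) (nhdsWithin 0 (Set.Ioi 0)) (nhds 0) := by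
      have hc : ContinuousAt (fun x : ℝ => x ^ (2*H)) 0 :=
        Real.continuousAt_rpow_const 0 (2*H) (Or.inr (by positivity))
      have := hc.tendsto
      rw [Real.zero_rpow (by positivity : (0:ℝ) < 2*H).ne'] at this
      exact this.mono_left nhdsWithin_le_nhds
    have h2 := (h1.const_mul (c_Ψ ^ 2 * c_M * (2 * H - 1) ^ 2 / H ^ 2))
    have h3 := (ENNReal.continuous_ofReal.tendsto 0).comp
      (by simpa using h2)
    simpa [Function.comp_def] using h3
  exact tendsto_of_tendsto_of_tendsto_of_le_of_le' tendsto_const_nhds hb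
    (Eventually.of_forall fun ε => zero_le)
    (eventually_nhdsWithin_of_forall fun ε hε => main ε hε)
end

section
/- Let M_t be a centered Gaussian martingale with quadratic variation c_M t^{2-2H}, and write M_t = B_{c_M t^{2-2H}} for a Brownian motion B via time change. Let b, c_M > 0 and 0 < ε < t with 2 b² c_M ln(t/ε) < 1. Then E[exp(b² ∫_ε^t s^{2H-3} M_s² ds)] < ∞. -/
open MeasureTheory ProbabilityTheory Real
open scoped ENNReal NNReal

lemma aux_pi {X : Type*} [MeasurableSpace X] (μ : Measure X) [SigmaFinite μ]
    {f : X → ℝ≥0∞} (hf : Measurable f) :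
    ∀ k : ℕ, ∫⁻ x : Fin k → X, ∏ i, f (x i) ∂(Measure.pi fun _ => μ) = (∫⁻ s, f s ∂μ) ^ k := by
  intro k
  induction k with
  | zero =>
      rw [Measure.pi_of_empty]
      simp
  | succ n ih =>
      have hmp := measurePreserving_piFinSuccAbove (fun _ : Fin (n+1) => μ) 0
      set g : X × (Fin n → X) → ℝ≥0∞ := fun p => f p.1 * ∏ j, f (p.2 j) with hg
      have hgmeas : Measurable g := by
        apply Measurable.mul (hf.comp measurable_fst)
        exact Finset.measurable_prod _ fun j _ => hf.comp ((measurable_pi_apply j).comp measurable_snd)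
      have h1 : ∫⁻ x : Fin (n+1) → X, ∏ i, f (x i) ∂(Measure.pi fun _ => μ)
          = ∫⁻ p, g p ∂(μ.prod (Measure.pi fun _ : Fin n => μ)) := by
        rw [← hmp.lintegral_comp hgmeas]
        congr 1
        ext x
        rw [Fin.prod_univ_succAbove (fun i => f (x i)) 0]
        rfl
      rw [h1, hg]
      rw [lintegral_prod_mul (f := f) (g := fun y : Fin n → X => ∏ j, f (y j)) hf.aemeasurable
        ((Finset.measurable_prod _ fun j _ => hf.comp (measurable_pi_apply j)).aemeasurable), ih]
      ring

lemma aux_mink {X Ω : Type*} [MeasurableSpace X] [MeasurableSpace Ω]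
    (μ : Measure X) [SigmaFinite μ] (P : Measure Ω) [SigmaFinite P]
    (F : X → Ω → ℝ≥0∞) (hF : Measurable (Function.uncurry F)) (k : ℕ) (hk : 1 ≤ k) :
    ∫⁻ ω, (∫⁻ s, F s ω ∂μ) ^ k ∂P
      ≤ (∫⁻ s, (∫⁻ ω, (F s ω) ^ k ∂P) ^ (1/(k:ℝ)) ∂μ) ^ k := by
  have hk0 : (k:ℝ) ≠ 0 := Nat.cast_ne_zero.mpr (by omega)
  have hsec : ∀ ω, Measurable fun s => F s ω := fun ω =>
    hF.comp (measurable_id.prodMk measurable_const)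
  have hsec' : ∀ x : X, Measurable (F x) := fun x =>
    hF.comp (measurable_const.prodMk measurable_id)
  set h : X → ℝ≥0∞ := fun s => (∫⁻ ω, (F s ω) ^ k ∂P) ^ (1/(k:ℝ)) with hh
  have hhmeas : Measurable h := by
    apply Measurable.pow _ measurable_const
    have : Measurable (Function.uncurry fun s ω => F s ω ^ k) := hF.pow_const k
    exact this.lintegral_prod_right
  have step1 : ∫⁻ ω, (∫⁻ s, F s ω ∂μ) ^ k ∂P
      = ∫⁻ ω, ∫⁻ x : Fin k → X, ∏ i, F (x i) ω ∂(Measure.pi fun _ => μ) ∂P := by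
    refine lintegral_congr fun ω => ?_
    exact (aux_pi μ (hsec ω) k).symm
  have hprodmeas : Measurable fun p : Ω × (Fin k → X) => ∏ i, F (p.2 i) p.1 := by
    refine Finset.measurable_prod _ fun i _ => ?_
    have : (fun p : Ω × (Fin k → X) => F (p.2 i) p.1)
        = Function.uncurry F ∘ (fun p : Ω × (Fin k → X) => (p.2 i, p.1)) := rfl
    rw [this]
    exact hF.comp (((measurable_pi_apply i).comp measurable_snd).prodMk measurable_fst)
  have step2 : ∫⁻ ω, ∫⁻ x : Fin k → X, ∏ i, F (x i) ω ∂(Measure.pi fun _ => μ) ∂P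
      = ∫⁻ x : Fin k → X, ∫⁻ ω, ∏ i, F (x i) ω ∂P ∂(Measure.pi fun _ => μ) :=
    lintegral_lintegral_swap hprodmeas.aemeasurable
  have step3 : ∀ x : Fin k → X,
      ∫⁻ ω, ∏ i, F (x i) ω ∂P ≤ ∏ i : Fin k, h (x i) := by
    intro x
    have hrw : ∀ ω, ∏ i, F (x i) ω = ∏ i : Fin k, (F (x i) ω ^ k) ^ (1/(k:ℝ)) := by
      intro ω
      refine Finset.prod_congr rfl fun i _ => ?_
      rw [← ENNReal.rpow_natCast (F (x i) ω) k, ← ENNReal.rpow_mul,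
        mul_one_div_cancel hk0, ENNReal.rpow_one]
    calc ∫⁻ ω, ∏ i, F (x i) ω ∂P
        = ∫⁻ ω, ∏ i : Fin k, ((fun ω => F (x i) ω ^ k) ω) ^ (1/(k:ℝ)) ∂P := by
          simp_rw [hrw]
      _ ≤ ∏ i : Fin k, (∫⁻ ω, F (x i) ω ^ k ∂P) ^ (1/(k:ℝ)) := by
          refine ENNReal.lintegral_prod_norm_pow_le _ (fun i _ => ?_) ?_ (fun i _ => by positivity)
          · exact ((hsec' (x i)).pow_const k).aemeasurable
          · simp [Finset.sum_const, hk0]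
      _ = ∏ i : Fin k, h (x i) := rfl
  calc ∫⁻ ω, (∫⁻ s, F s ω ∂μ) ^ k ∂P
      = ∫⁻ x : Fin k → X, ∫⁻ ω, ∏ i, F (x i) ω ∂P ∂(Measure.pi fun _ => μ) := by
        rw [step1, step2]
    _ ≤ ∫⁻ x : Fin k → X, ∏ i : Fin k, h (x i) ∂(Measure.pi fun _ => μ) :=
        lintegral_mono step3
    _ = (∫⁻ s, h s ∂μ) ^ k := aux_pi μ hhmeas k

lemma aux_gauss_exp (r θ : ℝ) (hr : 0 < r) (hθ0 : 0 < θ) (hθ1 : θ < 1) :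
    ∫⁻ x, ENNReal.ofReal (Real.exp (θ * x^2 / (2*r))) ∂(gaussianReal 0 r.toNNReal)
      ≤ ENNReal.ofReal (Real.sqrt (1/(1-θ))) := by
  have hv : r.toNNReal ≠ 0 := by
    simp [Real.toNNReal_eq_zero, not_le, hr]
  have hvr : ((r.toNNReal : ℝ≥0) : ℝ) = r := Real.coe_toNNReal r hr.le
  have hθ1' : 0 < 1 - θ := by linarith
  set c : ℝ := (1 - θ) / (2*r) with hc
  have hcpos : 0 < c := by positivity
  have hmg : Measurable fun x : ℝ => ENNReal.ofReal (Real.exp (θ * x^2 / (2*r))) := by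
    apply Measurable.ennreal_ofReal
    exact (Real.continuous_exp.comp (by continuity)).measurable
  rw [gaussianReal_of_var_ne_zero _ hv,
    lintegral_withDensity_eq_lintegral_mul _ (measurable_gaussianPDF _ _) hmg]
  have hpt : ∀ x : ℝ, (gaussianPDF 0 r.toNNReal * fun x => ENNReal.ofReal (Real.exp (θ * x^2 / (2*r)))) x
      = ENNReal.ofReal ((Real.sqrt (2*π*r))⁻¹ * Real.exp (-(c * x^2))) := by
    intro x
    simp only [Pi.mul_apply, gaussianPDF, gaussianPDFReal, hvr]
    rw [← ENNReal.ofReal_mul (by positivity)]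
    congr 1
    rw [mul_assoc, ← Real.exp_add]
    congr 2
    ring
  calc ∫⁻ x, (gaussianPDF 0 r.toNNReal * fun x => ENNReal.ofReal (Real.exp (θ * x^2 / (2*r)))) x
      = ∫⁻ x, ENNReal.ofReal ((Real.sqrt (2*π*r))⁻¹) * ENNReal.ofReal (Real.exp (-(c * x^2))) := by
        refine lintegral_congr fun x => ?_
        rw [hpt x, ENNReal.ofReal_mul (by positivity)]
    _ = ENNReal.ofReal ((Real.sqrt (2*π*r))⁻¹) * ∫⁻ x, ENNReal.ofReal (Real.exp (-(c * x^2))) := by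
        rw [lintegral_const_mul' _ _ ENNReal.ofReal_ne_top]
    _ = ENNReal.ofReal ((Real.sqrt (2*π*r))⁻¹) * ENNReal.ofReal (√(π/c)) := by
        congr 1
        rw [← MeasureTheory.ofReal_integral_eq_lintegral_ofReal]
        · congr 1
          simpa using integral_gaussian c
        · simpa using integrable_exp_neg_mul_sq hcpos
        · exact ae_of_all _ fun x => (Real.exp_pos _).le
    _ ≤ ENNReal.ofReal (Real.sqrt (1/(1-θ))) := by
        rw [← ENNReal.ofReal_mul (by positivity)]
        apply ENNReal.ofReal_le_ofReal
        have h2πr : (0:ℝ) < 2*π*r := by positivity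
        rw [inv_mul_eq_div, ← Real.sqrt_div (by positivity : (0:ℝ) ≤ π/c)]
        apply le_of_eq
        congr 1
        field_simp [hc]
        rw [hc, div_mul_eq_mul_div, div_mul_eq_mul_div, eq_div_iff (by positivity)]
        ring

lemma aux_gauss_moment (k : ℕ) (r θ : ℝ) (hr : 0 < r) (hθ0 : 0 < θ) (hθ1 : θ < 1) :
    ∫⁻ x, ENNReal.ofReal (x ^ (2*k)) ∂(gaussianReal 0 r.toNNReal)
      ≤ ENNReal.ofReal (k.factorial * (2*r/θ)^k) * ENNReal.ofReal (Real.sqrt (1/(1-θ))) := by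
  have hpt : ∀ x : ℝ, ENNReal.ofReal (x ^ (2*k))
      ≤ ENNReal.ofReal ((k.factorial : ℝ) * (2*r/θ)^k) * ENNReal.ofReal (Real.exp (θ * x^2 / (2*r))) := by
    intro x
    rw [← ENNReal.ofReal_mul (by positivity)]
    apply ENNReal.ofReal_le_ofReal
    set y : ℝ := θ * x^2 / (2*r) with hy
    have hy0 : 0 ≤ y := by positivity
    have h1 : x ^ (2*k) = (2*r/θ)^k * y^k := by
      rw [pow_mul, hy]
      rw [← mul_pow]
      congr 1
      field_simp
    have h2 : y ^ k ≤ k.factorial * Real.exp y := by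
      have hsum := Real.sum_le_exp_of_nonneg hy0 (k+1)
      have hterm := Finset.single_le_sum (f := fun i : ℕ => y ^ i / (i.factorial : ℝ))
        (fun i _ => by positivity) (Finset.self_mem_range_succ k)
      have hfac : (0:ℝ) < k.factorial := by positivity
      have h3 : y ^ k / (k.factorial : ℝ) ≤ Real.exp y := le_trans hterm hsum
      rw [div_le_iff₀ hfac] at h3
      linarith [h3, mul_comm (Real.exp y) ((k.factorial : ℝ))]
    calc x ^ (2*k) = (2*r/θ)^k * y^k := h1
      _ ≤ (2*r/θ)^k * (k.factorial * Real.exp y) := by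
          apply mul_le_mul_of_nonneg_left h2 (by positivity)
      _ = (k.factorial : ℝ) * (2*r/θ)^k * Real.exp y := by ring
  calc ∫⁻ x, ENNReal.ofReal (x ^ (2*k)) ∂(gaussianReal 0 r.toNNReal)
      ≤ ∫⁻ x, ENNReal.ofReal ((k.factorial : ℝ) * (2*r/θ)^k) * ENNReal.ofReal (Real.exp (θ * x^2 / (2*r))) ∂(gaussianReal 0 r.toNNReal) :=
        lintegral_mono hpt
    _ = ENNReal.ofReal ((k.factorial : ℝ) * (2*r/θ)^k) * ∫⁻ x, ENNReal.ofReal (Real.exp (θ * x^2 / (2*r))) ∂(gaussianReal 0 r.toNNReal) :=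
        lintegral_const_mul' _ _ ENNReal.ofReal_ne_top
    _ ≤ ENNReal.ofReal ((k.factorial : ℝ) * (2*r/θ)^k) * ENNReal.ofReal (Real.sqrt (1/(1-θ))) :=
        mul_le_mul_right (aux_gauss_exp r θ hr hθ0 hθ1) _


/-- Let `M` be a centered Gaussian martingale with quadratic variation
`c_M t^(2-2H)`, written via time change as `M_t = B_{c_M t^(2-2H)}` for a Brownian motion
`B` (modelled by its Gaussian marginals `B_r ~ N(0, r)`). Let `b, c_M > 0` and `0 < ε < t`
with `2 b² c_M ln(t/ε) < 1`. Then `E[exp(b² ∫_ε^t s^(2H-3) M_s² ds)] < ∞`. -/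
theorem stmt13
    {Ω : Type*} [MeasurableSpace Ω] (P : Measure Ω) [IsProbabilityMeasure P]
    (H c_M b : ℝ) (hH : H ∈ Set.Ioo (0 : ℝ) 1) (hcM : 0 < c_M) (hb : 0 < b)
    (B M : ℝ → Ω → ℝ)
    (hBmeas : Measurable (Function.uncurry B))
    (hBgauss : ∀ r : ℝ, 0 ≤ r → Measure.map (B r) P = gaussianReal 0 r.toNNReal)
    (htime : ∀ s : ℝ, 0 ≤ s → ∀ ω, M s ω = B (c_M * s ^ (2 - 2 * H)) ω)
    (hMcont : ∀ ω, Continuous fun s => M s ω)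
    (ε t : ℝ) (hε : 0 < ε) (hεt : ε < t)
    (hsmall : 2 * b ^ 2 * c_M * Real.log (t / ε) < 1) :
    ∫⁻ ω, ENNReal.ofReal
        (Real.exp (b ^ 2 * ∫ s in Set.Ioc ε t, s ^ (2 * H - 3) * (M s ω) ^ 2)) ∂P < ⊤ := by
  -- basic constants
  set L : ℝ := Real.log (t / ε) with hLdef
  have hL : 0 < L := Real.log_pos ((one_lt_div hε).mpr hεt)
  set θ : ℝ := (2 * b ^ 2 * c_M * L + 1) / 2 with hθdef
  have hθ0 : 0 < θ := by positivity
  have hθ1 : θ < 1 := by rw [hθdef]; linarith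
  have hqθ : 2 * b ^ 2 * c_M * L < θ := by rw [hθdef]; linarith
  set q : ℝ≥0∞ := ENNReal.ofReal (2 * b ^ 2 * c_M * L / θ) with hqdef
  have hq1 : q < 1 := by
    rw [hqdef, ← ENNReal.ofReal_one]
    exact ENNReal.ofReal_lt_ofReal_iff_of_nonneg (by positivity) |>.mpr
      ((div_lt_one hθ0).mpr hqθ)
  set c₀ : ℝ≥0∞ := ENNReal.ofReal (Real.sqrt (1/(1-θ))) with hc₀def
  have hc₀1 : 1 ≤ c₀ := by
    rw [hc₀def, ← ENNReal.ofReal_one]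
    apply ENNReal.ofReal_le_ofReal
    have h1θ : 0 < 1 - θ := by linarith
    have hle : (1:ℝ) ≤ 1/(1-θ) := by
      rw [le_div_iff₀ h1θ]
      linarith
    calc (1:ℝ) = Real.sqrt 1 := Real.sqrt_one.symm
      _ ≤ Real.sqrt (1/(1-θ)) := Real.sqrt_le_sqrt hle
  set μ : Measure ℝ := volume.restrict (Set.Ioc ε t) with hμdef
  set r : ℝ → ℝ := fun s => c_M * s ^ (2 - 2 * H) with hrdef
  have hrmeas : Measurable r := by
    apply Measurable.const_mul
    fun_prop
  have hrpos : ∀ s : ℝ, 0 < s → 0 < r s := fun s hs =>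
    mul_pos hcM (Real.rpow_pos_of_pos hs _)
  set F : ℝ → Ω → ℝ≥0∞ :=
    fun s ω => ENNReal.ofReal (s ^ (2 * H - 3) * (B (r s) ω) ^ 2) with hFdef
  have hFmeas : Measurable (Function.uncurry F) := by
    apply Measurable.ennreal_ofReal
    apply Measurable.mul
    · fun_prop
    · have : (fun p : ℝ × Ω => B (r p.1) p.2)
          = Function.uncurry B ∘ (fun p : ℝ × Ω => (r p.1, p.2)) := rfl
      exact ((hBmeas.comp ((hrmeas.comp measurable_fst).prodMk measurable_snd)).pow_const 2)
  set J : Ω → ℝ≥0∞ := fun ω => ∫⁻ s, F s ω ∂μ with hJdef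
  have hJmeas : Measurable J := by
    have : Measurable (Function.uncurry fun (ω : Ω) (s : ℝ) => F s ω) :=
      hFmeas.comp measurable_swap
    exact this.lintegral_prod_right
  set a : ℝ≥0∞ := ENNReal.ofReal (b ^ 2) with hadef
  -- Step A: pointwise series expansion
  have hpt : ∀ ω, ENNReal.ofReal
      (Real.exp (b ^ 2 * ∫ s in Set.Ioc ε t, s ^ (2 * H - 3) * (M s ω) ^ 2))
      = ∑' k : ℕ, ((k.factorial : ℝ≥0∞))⁻¹ * (a * J ω) ^ k := by
    intro ω
    set I : ℝ := ∫ s in Set.Ioc ε t, s ^ (2 * H - 3) * (M s ω) ^ 2 with hIdef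
    have hcont : ContinuousOn (fun s : ℝ => s ^ (2 * H - 3) * (M s ω) ^ 2) (Set.Icc ε t) := by
      apply ContinuousOn.mul
      · exact ContinuousOn.rpow_const continuousOn_id
          (fun x hx => Or.inl (ne_of_gt (lt_of_lt_of_le hε hx.1)))
      · exact ((hMcont ω).pow 2).continuousOn
    have hInt : IntegrableOn (fun s : ℝ => s ^ (2 * H - 3) * (M s ω) ^ 2)
        (Set.Ioc ε t) volume :=
      (hcont.integrableOn_Icc).mono_set Set.Ioc_subset_Icc_self
    have hnn : ∀ s ∈ Set.Ioc ε t, 0 ≤ s ^ (2 * H - 3) * (M s ω) ^ 2 := fun s hs =>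
      mul_nonneg (Real.rpow_nonneg (le_of_lt (hε.trans hs.1)) _) (sq_nonneg _)
    have hI0 : 0 ≤ I := setIntegral_nonneg measurableSet_Ioc hnn
    have hJω : ENNReal.ofReal I = J ω := by
      rw [hIdef, MeasureTheory.ofReal_integral_eq_lintegral_ofReal hInt
        ((ae_restrict_iff' measurableSet_Ioc).mpr (ae_of_all _ hnn))]
      refine setLIntegral_congr_fun measurableSet_Ioc (fun s hs => ?_)
      rw [htime s (le_of_lt (hε.trans hs.1)) ω]
    have hexp : Real.exp (b ^ 2 * I) = ∑' k : ℕ, (b ^ 2 * I) ^ k / (k.factorial : ℝ) := by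
      rw [Real.exp_eq_exp_ℝ, NormedSpace.exp_eq_tsum_div]
    rw [hexp, ENNReal.ofReal_tsum_of_nonneg (fun k => by positivity)
      (Real.summable_pow_div_factorial _)]
    congr 1
    ext k
    rw [ENNReal.ofReal_div_of_pos (by positivity), ENNReal.ofReal_natCast,
      ENNReal.ofReal_pow (by positivity), ENNReal.ofReal_mul (by positivity), hJω]
    rw [div_eq_mul_inv, mul_comm]
  -- Step B: swap sum and integral
  have hmeasterm : ∀ k : ℕ, AEMeasurable
      (fun ω => ((k.factorial : ℝ≥0∞))⁻¹ * (a * J ω) ^ k) P := fun k =>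
    (((hJmeas.const_mul a).pow_const k).const_mul _).aemeasurable
  have hswap : ∫⁻ ω, ENNReal.ofReal
      (Real.exp (b ^ 2 * ∫ s in Set.Ioc ε t, s ^ (2 * H - 3) * (M s ω) ^ 2)) ∂P
      = ∑' k : ℕ, ∫⁻ ω, ((k.factorial : ℝ≥0∞))⁻¹ * (a * J ω) ^ k ∂P := by
    rw [lintegral_congr hpt, lintegral_tsum hmeasterm]
  rw [hswap]
  -- Step C: bound each term by c₀ * q ^ k
  have hbound : ∀ k : ℕ, ∫⁻ ω, ((k.factorial : ℝ≥0∞))⁻¹ * (a * J ω) ^ k ∂P ≤ c₀ * q ^ k := by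
    intro k
    rcases Nat.eq_zero_or_pos k with hk0 | hk1
    · subst hk0
      simp only [pow_zero, Nat.factorial_zero, Nat.cast_one, inv_one, mul_one, one_mul]
      rw [lintegral_one, measure_univ]
      exact hc₀1
    -- k ≥ 1
    have hkR : (k:ℝ) ≠ 0 := Nat.cast_ne_zero.mpr (by omega)
    have hfac0 : ((k.factorial : ℝ≥0∞)) ≠ 0 := by
      simp [Nat.factorial_ne_zero]
    have hfactop : ((k.factorial : ℝ≥0∞)) ≠ ⊤ := ENNReal.natCast_ne_top _
    -- per-s bound on the L^k norm
    set X : ℝ → ℝ := fun s => (2/θ) * (c_M / s) with hXdef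
    set K : ℝ≥0∞ := ((k.factorial : ℝ≥0∞)) ^ (1/(k:ℝ)) * c₀ ^ (1/(k:ℝ)) with hKdef
    have hs_bound : ∀ s ∈ Set.Ioc ε t,
        (∫⁻ ω, (F s ω) ^ k ∂P) ^ (1/(k:ℝ)) ≤ K * ENNReal.ofReal (X s) := by
      intro s hs
      have hs0 : 0 < s := hε.trans hs.1
      have hrs0 : 0 < r s := hrpos s hs0
      have hf0 : 0 ≤ s ^ (2 * H - 3) := Real.rpow_nonneg hs0.le _
      have hBrs : Measurable (B (r s)) := hBmeas.comp measurable_prodMk_left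
      -- compute the k-th moment integral
      have hFk : ∀ ω, (F s ω) ^ k
          = ENNReal.ofReal ((s ^ (2 * H - 3)) ^ k) * ENNReal.ofReal ((B (r s) ω) ^ (2*k)) := by
        intro ω
        rw [hFdef]
        rw [← ENNReal.ofReal_pow (mul_nonneg hf0 (sq_nonneg _)), mul_pow,
          ← ENNReal.ofReal_mul (by positivity)]
        congr 2
        rw [pow_mul]
      have hmom : ∫⁻ ω, ENNReal.ofReal ((B (r s) ω) ^ (2*k)) ∂P
          ≤ ENNReal.ofReal (k.factorial * (2 * (r s) / θ) ^ k) * c₀ := by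
        have hmap : ∫⁻ ω, ENNReal.ofReal ((B (r s) ω) ^ (2*k)) ∂P
            = ∫⁻ x, ENNReal.ofReal (x ^ (2*k)) ∂(gaussianReal 0 (r s).toNNReal) := by
          rw [← hBgauss (r s) hrs0.le, lintegral_map (by fun_prop) hBrs]
        rw [hmap, hc₀def]
        exact aux_gauss_moment k (r s) θ hrs0 hθ0 hθ1
      have hint_le : ∫⁻ ω, (F s ω) ^ k ∂P
          ≤ ((k.factorial : ℝ≥0∞)) * c₀ * (ENNReal.ofReal (X s)) ^ k := by
        calc ∫⁻ ω, (F s ω) ^ k ∂P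
            = ENNReal.ofReal ((s ^ (2 * H - 3)) ^ k)
              * ∫⁻ ω, ENNReal.ofReal ((B (r s) ω) ^ (2*k)) ∂P := by
              simp_rw [hFk]
              exact lintegral_const_mul' _ _ ENNReal.ofReal_ne_top
          _ ≤ ENNReal.ofReal ((s ^ (2 * H - 3)) ^ k)
              * (ENNReal.ofReal (k.factorial * (2 * (r s) / θ) ^ k) * c₀) :=
              mul_le_mul_right hmom _
          _ = ((k.factorial : ℝ≥0∞)) * c₀ * (ENNReal.ofReal (X s)) ^ k := by
              rw [← mul_assoc, ← ENNReal.ofReal_mul (by positivity)]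
              rw [show (s ^ (2 * H - 3)) ^ k * ((k.factorial : ℝ) * (2 * (r s) / θ) ^ k)
                  = (k.factorial : ℝ) * (s ^ (2 * H - 3) * (2 * (r s) / θ)) ^ k by
                rw [mul_pow]; ring]
              have hXeq : s ^ (2 * H - 3) * (2 * (r s) / θ) = X s := by
                rw [hXdef, hrdef]
                have hcol : s ^ (2 * H - 3) * s ^ (2 - 2 * H) = s⁻¹ := by
                  rw [← Real.rpow_add hs0, show (2 * H - 3) + (2 - 2 * H) = (-1 : ℝ) by ring,
                    Real.rpow_neg_one]
                calc s ^ (2 * H - 3) * (2 * (c_M * s ^ (2 - 2 * H)) / θ)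
                    = (2 / θ) * c_M * (s ^ (2 * H - 3) * s ^ (2 - 2 * H)) := by ring
                  _ = 2 / θ * (c_M / s) := by rw [hcol]; ring
              rw [hXeq, ENNReal.ofReal_mul (by positivity), ENNReal.ofReal_natCast,
                ENNReal.ofReal_pow (by positivity)]
              ring
      calc (∫⁻ ω, (F s ω) ^ k ∂P) ^ (1/(k:ℝ))
          ≤ (((k.factorial : ℝ≥0∞)) * c₀ * (ENNReal.ofReal (X s)) ^ k) ^ (1/(k:ℝ)) :=
            ENNReal.rpow_le_rpow hint_le (by positivity)
        _ = K * ENNReal.ofReal (X s) := by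
            rw [ENNReal.mul_rpow_of_nonneg _ _ (by positivity),
              ENNReal.mul_rpow_of_nonneg _ _ (by positivity), hKdef]
            congr 1
            rw [← ENNReal.rpow_natCast (ENNReal.ofReal (X s)) k, ← ENNReal.rpow_mul,
              mul_one_div_cancel hkR, ENNReal.rpow_one]
    -- the logarithmic integral
    have hXcont : ContinuousOn X (Set.Icc ε t) := by
      apply ContinuousOn.mul continuousOn_const
      apply ContinuousOn.div continuousOn_const continuousOn_id
      exact fun x hx => ne_of_gt (lt_of_lt_of_le hε hx.1)
    have hXInt : IntegrableOn X (Set.Ioc ε t) volume :=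
      (hXcont.integrableOn_Icc).mono_set Set.Ioc_subset_Icc_self
    have hXnn : ∀ s ∈ Set.Ioc ε t, 0 ≤ X s := fun s hs => by
      have : 0 < s := hε.trans hs.1
      rw [hXdef]
      positivity
    have hlog : ∫⁻ s, ENNReal.ofReal (X s) ∂μ = ENNReal.ofReal ((2/θ) * c_M * L) := by
      rw [hμdef, ← MeasureTheory.ofReal_integral_eq_lintegral_ofReal hXInt
        ((ae_restrict_iff' measurableSet_Ioc).mpr (ae_of_all _ hXnn))]
      congr 1
      have : ∫ s in Set.Ioc ε t, X s = ∫ s in ε..t, (2/θ) * (c_M / s) := by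
        rw [intervalIntegral.integral_of_le hεt.le]
      rw [this]
      have : ∫ s in ε..t, (2/θ) * (c_M / s) = (2/θ) * c_M * ∫ s in ε..t, s⁻¹ := by
        simp_rw [div_eq_mul_inv, ← mul_assoc]
        rw [intervalIntegral.integral_const_mul]
      rw [this, integral_inv_of_pos hε (hε.trans hεt), hLdef]
    -- assemble via Minkowski
    have hmink := aux_mink μ P F hFmeas k hk1
    have hKpow : K ^ k = ((k.factorial : ℝ≥0∞)) * c₀ := by
      rw [hKdef, mul_pow, ← ENNReal.rpow_natCast (((k.factorial : ℝ≥0∞)) ^ (1/(k:ℝ))) k,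
        ← ENNReal.rpow_natCast (c₀ ^ (1/(k:ℝ))) k, ← ENNReal.rpow_mul, ← ENNReal.rpow_mul,
        one_div_mul_cancel hkR, ENNReal.rpow_one, ENNReal.rpow_one]
    have hJk : ∫⁻ ω, (J ω) ^ k ∂P ≤ ((k.factorial : ℝ≥0∞)) * c₀
        * (ENNReal.ofReal ((2/θ) * c_M * L)) ^ k := by
      refine le_trans hmink ?_
      have h1 : ∫⁻ s, (∫⁻ ω, (F s ω) ^ k ∂P) ^ (1/(k:ℝ)) ∂μ
          ≤ ∫⁻ s, K * ENNReal.ofReal (X s) ∂μ := by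
        rw [hμdef]
        apply setLIntegral_mono' measurableSet_Ioc
        intro s hs
        exact hs_bound s hs
      have h2 : ∫⁻ s, K * ENNReal.ofReal (X s) ∂μ = K * ENNReal.ofReal ((2/θ) * c_M * L) := by
        rw [lintegral_const_mul' _ _ ?_, hlog]
        · rw [hKdef]
          exact ENNReal.mul_ne_top (by
            apply ENNReal.rpow_ne_top_of_nonneg (by positivity) hfactop)
            (ENNReal.rpow_ne_top_of_nonneg (by positivity) ENNReal.ofReal_ne_top)
      calc (∫⁻ s, (∫⁻ ω, (F s ω) ^ k ∂P) ^ (1/(k:ℝ)) ∂μ) ^ k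
          ≤ (K * ENNReal.ofReal ((2/θ) * c_M * L)) ^ k := by
            apply pow_le_pow_left' (le_trans h1 (le_of_eq h2))
        _ = ((k.factorial : ℝ≥0∞)) * c₀ * (ENNReal.ofReal ((2/θ) * c_M * L)) ^ k := by
            rw [mul_pow, hKpow]
    -- final term computation
    have hterm : ∫⁻ ω, ((k.factorial : ℝ≥0∞))⁻¹ * (a * J ω) ^ k ∂P
        = ((k.factorial : ℝ≥0∞))⁻¹ * a ^ k * ∫⁻ ω, (J ω) ^ k ∂P := by
      simp_rw [mul_pow, ← mul_assoc]
      rw [lintegral_const_mul' _ _ (ENNReal.mul_ne_top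
        (ENNReal.inv_ne_top.mpr hfac0) (ENNReal.pow_ne_top ENNReal.ofReal_ne_top))]
    rw [hterm]
    calc ((k.factorial : ℝ≥0∞))⁻¹ * a ^ k * ∫⁻ ω, (J ω) ^ k ∂P
        ≤ ((k.factorial : ℝ≥0∞))⁻¹ * a ^ k
          * (((k.factorial : ℝ≥0∞)) * c₀ * (ENNReal.ofReal ((2/θ) * c_M * L)) ^ k) :=
          mul_le_mul_right hJk _
      _ = (((k.factorial : ℝ≥0∞))⁻¹ * ((k.factorial : ℝ≥0∞))) * c₀
          * (a * ENNReal.ofReal ((2/θ) * c_M * L)) ^ k := by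
          rw [mul_pow]
          ring
      _ = c₀ * q ^ k := by
          rw [ENNReal.inv_mul_cancel hfac0 hfactop, one_mul]
          congr 1
          rw [hadef, ← ENNReal.ofReal_mul (by positivity), hqdef]
          congr 1
          field_simp
  -- sum the geometric series
  calc ∑' k : ℕ, ∫⁻ ω, ((k.factorial : ℝ≥0∞))⁻¹ * (a * J ω) ^ k ∂P
      ≤ ∑' k : ℕ, c₀ * q ^ k := ENNReal.tsum_le_tsum hbound
    _ = c₀ * (1 - q)⁻¹ := by rw [ENNReal.tsum_mul_left, ENNReal.tsum_geometric]
    _ < ⊤ := by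
        apply ENNReal.mul_lt_top
        · exact ENNReal.ofReal_lt_top
        · exact ENNReal.inv_lt_top.mpr (tsub_pos_of_lt hq1)
end
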